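/- Let X = (X_1,…,X_d) be a random vector on a probability space and let X̂ = (X̂_1,…,X̂_d) be a random vector whose components are mutually independent with X̂_i equal in distribution to X_i for each i. If X is weakly associated, then X is positive supermodular dependent for bounded continuous test functions: for every bounded continuous supermodular function f : ℝ^d → ℝ, E f(X̂) ≤ E f(X). -/

import Mathlib

open MeasureTheory ProbabilityTheory Filter Topology

namespace WAPSD

noncomputable def gr (n j : ℕ) : ℝ := -(n : ℝ) + j / 2 ^ n

def Mn (n : ℕ) : ℕ := 2 * n * 2 ^ n

noncomputable def idx (n : ℕ) (v : ℝ) : ℕ := min (Mn n) (Int.toNat ⌊(v + n) * 2 ^ n⌋)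

noncomputable def rnd (n : ℕ) (v : ℝ) : ℝ := gr n (idx n v)

lemma gr_mono (n : ℕ) : Monotone (gr n) := by
  intro j j' hj
  unfold gr
  have h2 : (0:ℝ) < 2 ^ n := by positivity
  have : (j:ℝ) ≤ j' := Nat.cast_le.2 hj
  gcongr

lemma idx_le (n : ℕ) (v : ℝ) : idx n v ≤ Mn n := min_le_left _ _

lemma ind_iff (n j : ℕ) (v : ℝ) (hj : j + 1 ≤ Mn n) :
    gr n (j + 1) ≤ v ↔ j + 1 ≤ idx n v := by
  have h2 : (0:ℝ) < 2 ^ n := by positivity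
  have key : gr n (j + 1) ≤ v ↔ j + 1 ≤ Int.toNat ⌊(v + n) * 2 ^ n⌋ := by
    have h1 : gr n (j + 1) ≤ v ↔ ((j:ℝ) + 1) ≤ (v + n) * 2 ^ n := by
      unfold gr
      constructor
      · intro hh
        have hdiv : ((j:ℝ) + 1) / 2 ^ n ≤ v + n := by push_cast at hh ⊢; linarith
        exact (div_le_iff₀ h2).1 hdiv
      · intro hh
        have hdiv : ((j:ℝ) + 1) / 2 ^ n ≤ v + n := (div_le_iff₀ h2).2 hh
        push_cast; linarith
    rw [h1]
    have h3 : ((j:ℝ) + 1) ≤ (v + n) * 2 ^ n ↔ ((j:ℤ) + 1 ≤ ⌊(v + n) * 2 ^ n⌋) := by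
      rw [Int.le_floor]; push_cast; tauto
    rw [h3]
    constructor
    · intro hz
      have : (j : ℤ) < ⌊(v + n) * 2 ^ n⌋ := by omega
      have := Int.lt_toNat.2 this
      omega
    · intro hz
      have : (j : ℤ) < ⌊(v + n) * 2 ^ n⌋ := Int.lt_toNat.1 (by omega)
      omega
  rw [key]
  unfold idx
  rw [le_min_iff]
  tauto

lemma rnd_mono (n : ℕ) : Monotone (rnd n) := by
  intro v v' hv
  apply gr_mono
  unfold idx
  have h2 : (0:ℝ) ≤ 2 ^ n := by positivity
  exact min_le_min le_rfl (Int.toNat_le_toNat (Int.floor_le_floor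
    (mul_le_mul_of_nonneg_right (by linarith) h2)))

lemma rnd_measurable (n : ℕ) : Measurable (rnd n) := (rnd_mono n).measurable

lemma rnd_tendsto (v : ℝ) : Tendsto (fun n => rnd n v) atTop (𝓝 v) := by
  have hbound : ∀ n : ℕ, |v| ≤ n → |rnd n v - v| ≤ 1 / 2 ^ n := by
    intro n hn
    have h2 : (0:ℝ) < 2 ^ n := by positivity
    have hv1 : -(n:ℝ) ≤ v := by cases abs_le.1 hn; linarith
    have hv2 : v ≤ (n:ℝ) := by cases abs_le.1 hn; linarith
    set z := ⌊(v + n) * 2 ^ n⌋ with hz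
    have hz0 : 0 ≤ z := Int.floor_nonneg.2 (by nlinarith)
    have hzle : (z:ℝ) ≤ (v + n) * 2 ^ n := Int.floor_le _
    have hzgt : (v + n) * 2 ^ n < z + 1 := Int.lt_floor_add_one _
    have hzM : z ≤ (Mn n : ℤ) := by
      have : (z:ℝ) ≤ (Mn n : ℝ) := by
        refine hzle.trans ?_
        have : (Mn n : ℝ) = 2 * n * 2 ^ n := by unfold Mn; push_cast; ring
        nlinarith
      exact_mod_cast this
    have hidx : idx n v = Int.toNat z := by
      unfold idx
      rw [min_eq_right]
      exact Int.toNat_le.2 hzM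
    have hcast : ((Int.toNat z : ℕ) : ℝ) = (z : ℝ) := by
      exact_mod_cast Int.toNat_of_nonneg hz0
    have : rnd n v = -(n:ℝ) + (z : ℝ) / 2 ^ n := by
      unfold rnd gr
      rw [hidx, hcast]
    have hA : (z:ℝ) / 2 ^ n ≤ v + n := (div_le_iff₀ h2).2 hzle
    have hB : v + n < ((z:ℝ) + 1) / 2 ^ n := (lt_div_iff₀ h2).2 hzgt
    have hC : ((z:ℝ) + 1) / 2 ^ n = (z:ℝ) / 2 ^ n + 1 / 2 ^ n := by ring
    rw [this, abs_le]
    constructor <;> [linarith; linarith]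
  have h0 : Tendsto (fun n : ℕ => (1:ℝ) / 2 ^ n) atTop (𝓝 0) := by
    simpa [one_div, inv_pow] using
      tendsto_pow_atTop_nhds_zero_of_lt_one (by norm_num : (0:ℝ) ≤ 2⁻¹) (by norm_num)
  rw [tendsto_iff_dist_tendsto_zero]
  apply squeeze_zero' (Eventually.of_forall fun n => dist_nonneg) ?_ h0
  filter_upwards [eventually_ge_atTop ⌈|v|⌉₊] with n hn
  rw [Real.dist_eq]
  exact hbound n (le_trans (Nat.le_ceil _) (Nat.cast_le.2 hn))

lemma telescope (g : ℕ → ℝ) (M m : ℕ) (hm : m ≤ M) :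
    g m = g 0 + ∑ j ∈ Finset.range M, (g (j + 1) - g j) * (if j + 1 ≤ m then 1 else 0) := by
  have h1 : ∑ j ∈ Finset.range M, (g (j + 1) - g j) * (if j + 1 ≤ m then 1 else 0)
      = ∑ j ∈ Finset.range m, (g (j + 1) - g j) := by
    rw [show (∑ j ∈ Finset.range M, (g (j + 1) - g j) * (if j + 1 ≤ m then 1 else 0))
        = ∑ j ∈ Finset.range M, (if j + 1 ≤ m then g (j + 1) - g j else 0) from
      Finset.sum_congr rfl fun j _ => by split_ifs <;> simp]
    rw [← Finset.sum_filter]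
    congr 1
    ext j
    simp only [Finset.mem_filter, Finset.mem_range]
    omega
  rw [h1, Finset.sum_range_sub]
  ring

lemma integrable_of_bdd {α : Type*} [MeasurableSpace α] {μ : Measure α} [IsFiniteMeasure μ]
    {f : α → ℝ} {C : ℝ} (hm : AEStronglyMeasurable f μ) (hb : ∀ x, |f x| ≤ C) :
    Integrable f μ :=
  (integrable_const C).mono' hm (Eventually.of_forall (by simpa [Real.norm_eq_abs] using hb))

lemma abs_sub_bdd {a b C : ℝ} (ha : |a| ≤ C) (hb : |b| ≤ C) : |a - b| ≤ 2 * C := by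
  rw [abs_le] at ha hb ⊢
  exact ⟨by linarith [ha.1, hb.2], by linarith [ha.2, hb.1]⟩

lemma abs_integral_le' {α : Type*} [MeasurableSpace α] (μ : Measure α) [IsProbabilityMeasure μ]
    (g : α → ℝ) (C : ℝ) (hb : ∀ x, |g x| ≤ C) : |∫ x, g x ∂μ| ≤ C := by
  have := norm_integral_le_of_norm_le_const (μ := μ) (f := g) (C := C)
    (Eventually.of_forall fun x => by simpa [Real.norm_eq_abs] using hb x)
  simpa [Real.norm_eq_abs] using this

lemma core {Ω : Type*} [MeasurableSpace Ω] (P : Measure Ω) [IsProbabilityMeasure P]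
    {d : ℕ} (X : Fin d → Ω → ℝ) (hX : ∀ i, Measurable (X i))
    (WA : ∀ (I J : Finset (Fin d)), Disjoint I J →
      ∀ (f : (I → ℝ) → ℝ) (g : (J → ℝ) → ℝ), Measurable f → Measurable g →
        Monotone f → Monotone g → (∃ C, ∀ x, |f x| ≤ C) → (∃ C, ∀ x, |g x| ≤ C) →
        0 ≤ (∫ ω, f (fun i => X i.1 ω) * g (fun j => X j.1 ω) ∂P) -
            (∫ ω, f (fun i => X i.1 ω) ∂P) * (∫ ω, g (fun j => X j.1 ω) ∂P))
    (k : Fin d) (h : (Fin d → ℝ) → ℝ → ℝ)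
    (hc : Continuous fun p : (Fin d → ℝ) × ℝ => h p.1 p.2)
    (C : ℝ) (hb : ∀ u v, |h u v| ≤ C)
    (hdep : ∀ u u' v, (∀ i : Fin d, i < k → u i = u' i) → h u v = h u' v)
    (hsm : ∀ u u' : Fin d → ℝ, u ≤ u' → ∀ v v' : ℝ, v ≤ v' →
      h u v' - h u v ≤ h u' v' - h u' v) :
    ∫ v, (∫ ω, h (fun i => X i ω) v ∂P) ∂(P.map (X k))
      ≤ ∫ ω, h (fun i => X i ω) (X k ω) ∂P := by
  set μ := P.map (X k) with hμ
  haveI hμP : IsProbabilityMeasure μ := Measure.isProbabilityMeasure_map (hX k).aemeasurable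
  set Xv : Ω → (Fin d → ℝ) := fun ω i => X i ω with hXv
  have hXvm : Measurable Xv := measurable_pi_lambda _ hX
  have meas1 : ∀ c : ℝ, Measurable fun ω => h (Xv ω) c := fun c =>
    hc.measurable.comp (hXvm.prodMk measurable_const)
  have measu : ∀ c : ℝ, Measurable fun u : Fin d → ℝ => h u c := fun c =>
    hc.measurable.comp (measurable_id.prodMk measurable_const)
  have hcω : ∀ ω : Ω, Continuous fun v => h (Xv ω) v := fun ω =>
    hc.comp (continuous_const.prodMk continuous_id)
  set Φ : ℝ → ℝ := fun v => ∫ ω, h (Xv ω) v ∂P with hΦ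
  have hΦc : Continuous Φ := by
    apply continuous_of_dominated (bound := fun _ => C)
    · exact fun v => ((meas1 v).aestronglyMeasurable)
    · exact fun v => Eventually.of_forall fun ω => by
        simpa [Real.norm_eq_abs] using hb (Xv ω) v
    · exact integrable_const C
    · exact Eventually.of_forall fun ω => hcω ω
  have hΦb : ∀ v, |Φ v| ≤ C := by
    intro v
    have := norm_integral_le_of_norm_le_const (μ := P)
      (f := fun ω => h (Xv ω) v) (C := C)
      (Eventually.of_forall fun ω => by simpa [Real.norm_eq_abs] using hb (Xv ω) v)
    simpa [Real.norm_eq_abs] using this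
  -- discrete inequality
  have key : ∀ n : ℕ, ∫ v, Φ (rnd n v) ∂μ ≤ ∫ ω, h (Xv ω) (rnd n (X k ω)) ∂P := by
    intro n
    set t : ℕ → ℝ := gr n with ht
    have tmono : ∀ j, t j ≤ t (j + 1) := fun j => gr_mono n (Nat.le_succ j)
    set Δ : ℕ → Ω → ℝ := fun j ω => h (Xv ω) (t (j + 1)) - h (Xv ω) (t j) with hΔ
    set ind : ℕ → ℝ → ℝ := fun j v => if t (j + 1) ≤ v then 1 else 0 with hind
    have tele : ∀ (ω : Ω) (v : ℝ), h (Xv ω) (rnd n v)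
        = h (Xv ω) (t 0) + ∑ j ∈ Finset.range (Mn n), Δ j ω * ind j v := by
      intro ω v
      have h1 := telescope (fun j => h (Xv ω) (t j)) (Mn n) (idx n v) (idx_le n v)
      beta_reduce at h1
      have h2 : ∀ j ∈ Finset.range (Mn n),
          (h (Xv ω) (t (j + 1)) - h (Xv ω) (t j)) * (if j + 1 ≤ idx n v then (1:ℝ) else 0)
          = Δ j ω * ind j v := by
        intro j hj
        have hj' : j + 1 ≤ Mn n := Finset.mem_range.1 hj
        simp only [hΔ, hind, ht]
        congr 1
        exact (if_congr (ind_iff n j v hj') rfl rfl).symm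
      rw [Finset.sum_congr rfl h2] at h1
      exact h1
    have measΔ : ∀ j, Measurable (Δ j) := fun j => (meas1 _).sub (meas1 _)
    have bΔ : ∀ j ω, |Δ j ω| ≤ 2 * C := fun j ω =>
      abs_sub_bdd (hb (Xv ω) (t (j+1))) (hb (Xv ω) (t j))
    have measInd : ∀ j, Measurable fun v : ℝ => ind j v := fun j =>
      Measurable.ite (measurableSet_le measurable_const measurable_id) measurable_const measurable_const
    have bInd : ∀ j v, |ind j v| ≤ 1 := fun j v => by
      simp only [hind]; split_ifs <;> norm_num
    have intΔind : ∀ j, Integrable (fun ω => Δ j ω * ind j (X k ω)) P := fun j =>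
      integrable_of_bdd (((measΔ j).mul ((measInd j).comp (hX k))).aestronglyMeasurable)
        (C := 2 * C) (fun ω => by
          rw [abs_mul]
          calc |Δ j ω| * |ind j (X k ω)| ≤ (2*C) * 1 :=
            mul_le_mul (bΔ j ω) (bInd j _) (abs_nonneg _) (by
              have := (abs_nonneg (Δ j ω)).trans (bΔ j ω); linarith)
          _ = 2*C := by ring)
    have intΔ : ∀ j, Integrable (Δ j) P := fun j =>
      integrable_of_bdd (measΔ j).aestronglyMeasurable (bΔ j)
    have intBase : Integrable (fun ω => h (Xv ω) (t 0)) P :=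
      integrable_of_bdd (meas1 _).aestronglyMeasurable (fun ω => hb _ _)
    -- RHS expansion
    have RHSeq : ∫ ω, h (Xv ω) (rnd n (X k ω)) ∂P
        = (∫ ω, h (Xv ω) (t 0) ∂P)
          + ∑ j ∈ Finset.range (Mn n), ∫ ω, Δ j ω * ind j (X k ω) ∂P := by
      rw [show (fun ω => h (Xv ω) (rnd n (X k ω)))
          = fun ω => h (Xv ω) (t 0) + ∑ j ∈ Finset.range (Mn n), Δ j ω * ind j (X k ω)
        from funext fun ω => tele ω (X k ω)]
      rw [integral_add intBase (integrable_finset_sum _ fun j _ => intΔind j),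
        integral_finset_sum _ fun j _ => intΔind j]
    -- Φ expansion
    have Φeq : ∀ v, Φ (rnd n v) = (∫ ω, h (Xv ω) (t 0) ∂P)
        + ∑ j ∈ Finset.range (Mn n), (∫ ω, Δ j ω ∂P) * ind j v := by
      intro v
      have : Φ (rnd n v) = ∫ ω, (h (Xv ω) (t 0)
          + ∑ j ∈ Finset.range (Mn n), Δ j ω * ind j v) ∂P :=
        integral_congr_ae (Eventually.of_forall fun ω => tele ω v)
      rw [this, integral_add intBase (integrable_finset_sum _ fun j _ =>
          (intΔ j).mul_const _),
        integral_finset_sum _ fun j _ => (intΔ j).mul_const _]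
      congr 1
      exact Finset.sum_congr rfl fun j _ => integral_mul_const _ _
    -- LHS expansion
    have LHSeq : ∫ v, Φ (rnd n v) ∂μ
        = (∫ ω, h (Xv ω) (t 0) ∂P)
          + ∑ j ∈ Finset.range (Mn n), (∫ ω, Δ j ω ∂P) * (∫ ω, ind j (X k ω) ∂P) := by
      rw [show (fun v => Φ (rnd n v)) = fun v => (∫ ω, h (Xv ω) (t 0) ∂P)
          + ∑ j ∈ Finset.range (Mn n), (∫ ω, Δ j ω ∂P) * ind j v from funext Φeq]
      have intind : ∀ j, Integrable (fun v => (∫ ω, Δ j ω ∂P) * ind j v) μ := fun j =>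
        (integrable_of_bdd (C := 1) (measInd j).aestronglyMeasurable (bInd j)).const_mul _
      rw [integral_add (integrable_const _) (integrable_finset_sum _ fun j _ => intind j),
        integral_finset_sum _ fun j _ => intind j, integral_const]
      simp only [probReal_univ, one_smul]
      congr 1
      refine Finset.sum_congr rfl fun j _ => ?_
      rw [integral_const_mul]
      congr 1
      rw [hμ, integral_map (hX k).aemeasurable (measInd j).aestronglyMeasurable]
    -- WA per term
    have step : ∀ j ∈ Finset.range (Mn n),
        (∫ ω, Δ j ω ∂P) * (∫ ω, ind j (X k ω) ∂P) ≤ ∫ ω, Δ j ω * ind j (X k ω) ∂P := by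
      intro j _
      classical
      set I : Finset (Fin d) := Finset.univ.filter (fun i => i < k) with hI
      set J : Finset (Fin d) := {k} with hJ
      have hdisj : Disjoint I J := by
        rw [Finset.disjoint_left]
        intro i hi hij
        rw [hI, Finset.mem_filter] at hi
        rw [hJ, Finset.mem_singleton] at hij
        exact absurd (hij ▸ hi.2) (lt_irrefl k)
      set ext : (I → ℝ) → (Fin d → ℝ) :=
        fun y i => if hi : i ∈ I then y ⟨i, hi⟩ else 0 with hext
      have extMeas : Measurable ext := measurable_pi_lambda _ (fun i => by
        by_cases hi : i ∈ I
        · simp only [hext, dif_pos hi]; exact measurable_pi_apply _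
        · simp only [hext, dif_neg hi]; exact measurable_const)
      have extMono : Monotone ext := fun y y' hyy i => by
        simp only [hext]
        split
        · exact hyy _
        · exact le_rfl
      set fI : (I → ℝ) → ℝ :=
        fun y => h (ext y) (t (j + 1)) - h (ext y) (t j) with hfI
      set gJ : (J → ℝ) → ℝ :=
        fun z => if t (j + 1) ≤ z ⟨k, Finset.mem_singleton_self k⟩ then 1 else 0 with hgJ
      have hfm : Measurable fI :=
        ((measu (t (j+1))).comp extMeas).sub ((measu (t j)).comp extMeas)
      have hgm : Measurable gJ :=
        Measurable.ite (measurableSet_le measurable_const (measurable_pi_apply _))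
          measurable_const measurable_const
      have hfmono : Monotone fI := fun y y' hy =>
        hsm (ext y) (ext y') (extMono hy) (t j) (t (j + 1)) (tmono j)
      have hgmono : Monotone gJ := fun z z' hz => by
        simp only [hgJ]
        split_ifs with h1 h2
        · exact le_rfl
        · exact absurd (h1.trans (hz _)) h2
        · norm_num
        · exact le_rfl
      have hfb : ∃ C', ∀ y, |fI y| ≤ C' := ⟨2 * C, fun y =>
        abs_sub_bdd (hb (ext y) (t (j+1))) (hb (ext y) (t j))⟩
      have hgb : ∃ C', ∀ z, |gJ z| ≤ C' := ⟨1, fun z => by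
        simp only [hgJ]; split_ifs <;> norm_num⟩
      have hwa := WA I J hdisj fI gJ hfm hgm hfmono hgmono hfb hgb
      have e1 : ∀ ω, fI (fun i : I => X i.1 ω) = Δ j ω := by
        intro ω
        have hpatch : ∀ c, h (ext (fun i : I => X i.1 ω)) c = h (Xv ω) c := by
          intro c
          refine hdep _ _ c fun i hik => ?_
          have hiI : i ∈ I := by rw [hI, Finset.mem_filter]; exact ⟨Finset.mem_univ _, hik⟩
          simp only [hext, dif_pos hiI, hXv]
        simp only [hfI, hΔ, hpatch]
      have e2 : ∀ ω, gJ (fun j' : J => X j'.1 ω) = ind j (X k ω) := fun ω => rfl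
      simp only [e1, e2] at hwa
      linarith
    rw [LHSeq, RHSeq]
    exact add_le_add_right (Finset.sum_le_sum step) _
  -- limits
  have L1 : Tendsto (fun n => ∫ v, Φ (rnd n v) ∂μ) atTop (𝓝 (∫ v, Φ v ∂μ)) := by
    apply tendsto_integral_of_dominated_convergence (bound := fun _ => C)
    · exact fun n => (hΦc.measurable.comp (rnd_measurable n)).aestronglyMeasurable
    · exact integrable_const C
    · exact fun n => Eventually.of_forall fun v => by
        simpa [Real.norm_eq_abs] using hΦb (rnd n v)
    · exact Eventually.of_forall fun v =>
        (hΦc.continuousAt.tendsto).comp (rnd_tendsto v)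
  have L2 : Tendsto (fun n => ∫ ω, h (Xv ω) (rnd n (X k ω)) ∂P) atTop
      (𝓝 (∫ ω, h (Xv ω) (X k ω) ∂P)) := by
    apply tendsto_integral_of_dominated_convergence (bound := fun _ => C)
    · exact fun n => (hc.measurable.comp
        (hXvm.prodMk ((rnd_measurable n).comp (hX k)))).aestronglyMeasurable
    · exact integrable_const C
    · exact fun n => Eventually.of_forall fun ω => by
        simpa [Real.norm_eq_abs] using hb (Xv ω) (rnd n (X k ω))
    · exact Eventually.of_forall fun ω =>
        ((hcω ω).continuousAt.tendsto).comp (rnd_tendsto (X k ω))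
  exact le_of_tendsto_of_tendsto' L1 L2 key

end WAPSD

open WAPSD

/-- If the random vector `X = (X_1,…,X_d)` is weakly associated and `X̂` is a
random vector with mutually independent components satisfying `X̂ᵢ =ᵈ Xᵢ`, then for every
bounded continuous supermodular `f : ℝ^d → ℝ` one has `E f(X̂) ≤ E f(X)`. -/
theorem weakly_associated_implies_PSD
    {Ω : Type*} [MeasurableSpace Ω] (P : Measure Ω) [IsProbabilityMeasure P]
    {Ω' : Type*} [MeasurableSpace Ω'] (P' : Measure Ω') [IsProbabilityMeasure P']
    (d : ℕ) (X : Fin d → Ω → ℝ) (hX : ∀ i, Measurable (X i))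
    (Xhat : Fin d → Ω' → ℝ) (hXhat : ∀ i, Measurable (Xhat i))
    (hindep : iIndepFun (m := fun _ => (inferInstance : MeasurableSpace ℝ)) Xhat P')
    (hid : ∀ i, IdentDistrib (Xhat i) (X i) P' P)
    (WA : ∀ (I J : Finset (Fin d)), Disjoint I J →
      ∀ (f : (I → ℝ) → ℝ) (g : (J → ℝ) → ℝ), Measurable f → Measurable g →
        Monotone f → Monotone g → (∃ C, ∀ x, |f x| ≤ C) → (∃ C, ∀ x, |g x| ≤ C) →
        0 ≤ (∫ ω, f (fun i => X i.1 ω) * g (fun j => X j.1 ω) ∂P) -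
            (∫ ω, f (fun i => X i.1 ω) ∂P) * (∫ ω, g (fun j => X j.1 ω) ∂P)) :
    ∀ f : (Fin d → ℝ) → ℝ, Continuous f → (∃ C, ∀ x, |f x| ≤ C) →
      (∀ x y, f x + f y ≤ f (x ⊓ y) + f (x ⊔ y)) →
      (∫ ω, f (fun i => Xhat i ω) ∂P') ≤ ∫ ω, f (fun i => X i ω) ∂P := by
  intro f hfc hfb hsmf
  obtain ⟨C, hC⟩ := hfb
  classical
  set F : ℕ → ℝ := fun k =>
    ∫ ω', (∫ ω, f (fun i => if (i:ℕ) < k then X i ω else Xhat i ω') ∂P) ∂P' with hF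
  have h0 : F 0 = ∫ ω', f (fun i => Xhat i ω') ∂P' := by
    simp only [hF, Nat.not_lt_zero, if_false]
    refine integral_congr_ae (Filter.Eventually.of_forall fun ω' => ?_)
    simp [integral_const]
  have hd : F d = ∫ ω, f (fun i => X i ω) ∂P := by
    simp only [hF]
    have hin : ∀ ω' : Ω', (∫ ω, f (fun i => if (i:ℕ) < d then X i ω else Xhat i ω') ∂P)
        = ∫ ω, f (fun i => X i ω) ∂P := by
      intro ω'
      refine integral_congr_ae (Filter.Eventually.of_forall fun ω =>
        congrArg f (funext fun i => ?_))
      rw [if_pos i.isLt]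
    rw [integral_congr_ae (Filter.Eventually.of_forall hin)]
    simp [integral_const]
  have hstep : ∀ k, k < d → F k ≤ F (k + 1) := by
    intro k hk
    set κ : Fin d := ⟨k, hk⟩ with hκ
    set W : Ω' → (Fin d → ℝ) := fun ω' i => if κ < i then Xhat i ω' else 0 with hW
    have hWm : Measurable W := by
      rw [hW]
      refine measurable_pi_lambda _ (fun i => ?_)
      by_cases hi : κ < i
      · simp only [if_pos hi]; exact hXhat i
      · simp only [if_neg hi]; exact measurable_const
    set S : Finset (Fin d) := Finset.univ.filter (fun i => κ < i) with hS
    have hdisjS : Disjoint S {κ} := by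
      rw [Finset.disjoint_left]
      intro i hi hik
      rw [hS, Finset.mem_filter] at hi
      rw [Finset.mem_singleton] at hik
      exact absurd (hik ▸ hi.2) (lt_irrefl κ)
    have base := hindep.indepFun_finset S {κ} hdisjS hXhat
    set φ : (S → ℝ) → (Fin d → ℝ) := fun y i => if hi : i ∈ S then y ⟨i, hi⟩ else 0 with hφ
    have hφm : Measurable φ := measurable_pi_lambda _ (fun i => by
      by_cases hi : i ∈ S
      · simp only [hφ, dif_pos hi]; exact measurable_pi_apply _
      · simp only [hφ, dif_neg hi]; exact measurable_const)
    set ψ : (({κ} : Finset (Fin d)) → ℝ) → ℝ :=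
      fun z => z ⟨κ, Finset.mem_singleton_self κ⟩ with hψ
    have hψm : Measurable ψ := measurable_pi_apply _
    have hpair : IndepFun W (Xhat κ) P' := by
      have hcomp := base.comp hφm hψm
      have e1 : (φ ∘ fun a (i : S) => Xhat i a) = W := by
        funext a
        funext i
        by_cases hi : i ∈ S
        · have hκi : κ < i := by rw [hS, Finset.mem_filter] at hi; exact hi.2
          simp only [Function.comp_apply, hφ, dif_pos hi, hW, if_pos hκi]
        · have hκi : ¬ κ < i := by
            rw [hS, Finset.mem_filter] at hi
            intro hcon; exact hi ⟨Finset.mem_univ _, hcon⟩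
          simp only [Function.comp_apply, hφ, dif_neg hi, hW, if_neg hκi]
      have e2 : (ψ ∘ fun a (i : (({κ} : Finset (Fin d)) : Finset (Fin d))) => Xhat i a)
          = Xhat κ := rfl
      rwa [e1, e2] at hcomp
    have lawpair : P'.map (fun ω' => (W ω', Xhat κ ω'))
        = (P'.map W).prod (P'.map (Xhat κ)) :=
      (indepFun_iff_map_prod_eq_prod_map_map hWm.aemeasurable (hXhat κ).aemeasurable).1 hpair
    have lawκ : P'.map (Xhat κ) = P.map (X κ) := (hid κ).map_eq
    haveI iW : IsProbabilityMeasure (P'.map W) := Measure.isProbabilityMeasure_map hWm.aemeasurable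
    haveI iκ : IsProbabilityMeasure (P.map (X κ)) :=
      Measure.isProbabilityMeasure_map (hX κ).aemeasurable
    -- the two parametrized integrals
    set Ψ : (Fin d → ℝ) × ℝ → ℝ := fun p =>
      ∫ ω, f (fun i => if (i:ℕ) < k then X i ω else if i = κ then p.2 else p.1 i) ∂P with hΨ
    have patchCont : ∀ ω : Ω, Continuous fun p : (Fin d → ℝ) × ℝ =>
        (fun i => if (i:ℕ) < k then X i ω else if i = κ then p.2 else p.1 i : Fin d → ℝ) := by
      intro ω
      refine continuous_pi fun i => ?_
      by_cases h1 : (i:ℕ) < k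
      · simp only [if_pos h1]; exact continuous_const
      · simp only [if_neg h1]
        by_cases h2 : i = κ
        · simp only [if_pos h2]; exact continuous_snd
        · simp only [if_neg h2]; exact (continuous_apply i).comp continuous_fst
    have patchMeas : ∀ p : (Fin d → ℝ) × ℝ, Measurable fun ω =>
        (fun i => if (i:ℕ) < k then X i ω else if i = κ then p.2 else p.1 i : Fin d → ℝ) := by
      intro p
      refine measurable_pi_lambda _ fun i => ?_
      by_cases h1 : (i:ℕ) < k
      · simp only [if_pos h1]; exact hX i
      · simp only [if_neg h1]; exact measurable_const
    have hΨc : Continuous Ψ := by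
      rw [hΨ]
      apply continuous_of_dominated (bound := fun _ => C)
      · exact fun p => (hfc.measurable.comp (patchMeas p)).aestronglyMeasurable
      · exact fun p => Filter.Eventually.of_forall fun ω => by
          simpa [Real.norm_eq_abs] using hC _
      · exact integrable_const C
      · exact Filter.Eventually.of_forall fun ω => hfc.comp (patchCont ω)
    have hΨb : ∀ p, |Ψ p| ≤ C := fun p => abs_integral_le' P _ C (fun ω => hC _)
    set G : (Fin d → ℝ) → ℝ := fun w =>
      ∫ ω, f (fun i => if (i:ℕ) < k + 1 then X i ω else w i) ∂P with hG
    have patchCont2 : ∀ ω : Ω, Continuous fun w : Fin d → ℝ =>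
        (fun i => if (i:ℕ) < k + 1 then X i ω else w i : Fin d → ℝ) := by
      intro ω
      refine continuous_pi fun i => ?_
      by_cases h1 : (i:ℕ) < k + 1
      · simp only [if_pos h1]; exact continuous_const
      · simp only [if_neg h1]; exact continuous_apply i
    have patchMeas2 : ∀ w : Fin d → ℝ, Measurable fun ω =>
        (fun i => if (i:ℕ) < k + 1 then X i ω else w i : Fin d → ℝ) := by
      intro w
      refine measurable_pi_lambda _ fun i => ?_
      by_cases h1 : (i:ℕ) < k + 1
      · simp only [if_pos h1]; exact hX i
      · simp only [if_neg h1]; exact measurable_const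
    have hGc : Continuous G := by
      rw [hG]
      apply continuous_of_dominated (bound := fun _ => C)
      · exact fun w => (hfc.measurable.comp (patchMeas2 w)).aestronglyMeasurable
      · exact fun w => Filter.Eventually.of_forall fun ω => by
          simpa [Real.norm_eq_abs] using hC _
      · exact integrable_const C
      · exact Filter.Eventually.of_forall fun ω => hfc.comp (patchCont2 ω)
    have hGb : ∀ w, |G w| ≤ C := fun w => abs_integral_le' P _ C (fun ω => hC _)
    -- rewrite F k and F (k+1)
    have Fk : F k = ∫ ω', Ψ (W ω', Xhat κ ω') ∂P' := by
      simp only [hF]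
      refine integral_congr_ae (Filter.Eventually.of_forall fun ω' => ?_)
      simp only [hΨ]
      refine integral_congr_ae (Filter.Eventually.of_forall fun ω =>
        congrArg f (funext fun i => ?_))
      by_cases h1 : (i:ℕ) < k
      · simp [h1]
      · simp only [if_neg h1]
        by_cases h2 : i = κ
        · subst h2; simp
        · have hik : (i:ℕ) ≠ k := fun hh => h2 (Fin.ext hh)
          have h3 : κ < i := by
            rw [Fin.lt_def]
            simp only [hκ]
            omega
          simp only [if_neg h2, hW, if_pos h3]
    have Fk1 : F (k + 1) = ∫ ω', G (W ω') ∂P' := by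
      simp only [hF]
      refine integral_congr_ae (Filter.Eventually.of_forall fun ω' => ?_)
      simp only [hG]
      refine integral_congr_ae (Filter.Eventually.of_forall fun ω =>
        congrArg f (funext fun i => ?_))
      by_cases h1 : (i:ℕ) < k + 1
      · simp [h1]
      · have h3 : κ < i := by
          rw [Fin.lt_def]
          simp only [hκ]
          omega
        simp only [if_neg h1, hW, if_pos h3]
    -- Fubini / independence
    have key1 : ∫ ω', Ψ (W ω', Xhat κ ω') ∂P'
        = ∫ w, ∫ v, Ψ (w, v) ∂(P.map (X κ)) ∂(P'.map W) := by
      have hpm : Measurable fun ω' => (W ω', Xhat κ ω') := hWm.prodMk (hXhat κ)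
      have e := integral_map (μ := P') hpm.aemeasurable
        (f := Ψ) hΨc.measurable.aestronglyMeasurable
      calc ∫ ω', Ψ (W ω', Xhat κ ω') ∂P'
          = ∫ p, Ψ p ∂(P'.map fun ω' => (W ω', Xhat κ ω')) := e.symm
        _ = ∫ p, Ψ p ∂((P'.map W).prod (P.map (X κ))) := by rw [lawpair, lawκ]
        _ = ∫ w, ∫ v, Ψ (w, v) ∂(P.map (X κ)) ∂(P'.map W) :=
            integral_prod _
              (integrable_of_bdd hΨc.measurable.aestronglyMeasurable hΨb)
    have key2 : ∫ ω', G (W ω') ∂P' = ∫ w, G w ∂(P'.map W) :=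
      (integral_map hWm.aemeasurable hGc.measurable.aestronglyMeasurable).symm
    -- pointwise inequality from core
    have hptw : ∀ w : Fin d → ℝ, ∫ v, Ψ (w, v) ∂(P.map (X κ)) ≤ G w := by
      intro w
      have hcont : Continuous fun p : (Fin d → ℝ) × ℝ =>
          f (fun i => if (i:ℕ) < k then p.1 i else if i = κ then p.2 else w i) := by
        refine hfc.comp (continuous_pi fun i => ?_)
        by_cases h1 : (i:ℕ) < k
        · simp only [if_pos h1]; exact (continuous_apply i).comp continuous_fst
        · simp only [if_neg h1]
          by_cases h2 : i = κ
          · simp only [if_pos h2]; exact continuous_snd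
          · simp only [if_neg h2]; exact continuous_const
      have hdep : ∀ u u' : Fin d → ℝ, ∀ v : ℝ, (∀ i : Fin d, i < κ → u i = u' i) →
          f (fun i : Fin d => if (i:ℕ) < k then u i else if i = κ then v else w i)
          = f (fun i : Fin d => if (i:ℕ) < k then u' i else if i = κ then v else w i) := by
        intro u u' v hu
        refine congrArg f (funext fun i => ?_)
        by_cases h1 : (i:ℕ) < k
        · simp only [if_pos h1]
          exact hu i (by rw [Fin.lt_def]; simpa [hκ] using h1)
        · simp only [if_neg h1]
      have hsm : ∀ u u' : Fin d → ℝ, u ≤ u' → ∀ v v' : ℝ, v ≤ v' →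
          f (fun i : Fin d => if (i:ℕ) < k then u i else if i = κ then v' else w i)
            - f (fun i : Fin d => if (i:ℕ) < k then u i else if i = κ then v else w i)
          ≤ f (fun i : Fin d => if (i:ℕ) < k then u' i else if i = κ then v' else w i)
            - f (fun i : Fin d => if (i:ℕ) < k then u' i else if i = κ then v else w i) := by
        intro u u' hle v v' hvle
        set x : Fin d → ℝ := fun i : Fin d => if (i:ℕ) < k then u i else if i = κ then v' else w i
        set y : Fin d → ℝ := fun i : Fin d => if (i:ℕ) < k then u' i else if i = κ then v else w i
        have hinf : x ⊓ y = fun i : Fin d => if (i:ℕ) < k then u i else if i = κ then v else w i := by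
          funext i
          rw [Pi.inf_apply]
          by_cases h1 : (i:ℕ) < k
          · simp only [x, y, if_pos h1]; exact inf_eq_left.2 (hle i)
          · by_cases h2 : i = κ
            · simp only [x, y, if_neg h1, if_pos h2]; exact inf_eq_right.2 hvle
            · simp only [x, y, if_neg h1, if_neg h2]; exact inf_idem _
        have hsup : x ⊔ y = fun i : Fin d => if (i:ℕ) < k then u' i else if i = κ then v' else w i := by
          funext i
          rw [Pi.sup_apply]
          by_cases h1 : (i:ℕ) < k
          · simp only [x, y, if_pos h1]; exact sup_eq_right.2 (hle i)
          · by_cases h2 : i = κ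
            · simp only [x, y, if_neg h1, if_pos h2]; exact sup_eq_left.2 hvle
            · simp only [x, y, if_neg h1, if_neg h2]; exact sup_idem _
        have := hsmf x y
        rw [hinf, hsup] at this
        linarith
      have hcore := core P X hX WA κ
        (fun u v => f (fun i => if (i:ℕ) < k then u i else if i = κ then v else w i))
        hcont C (fun u v => hC _) hdep hsm
      have eL : ∫ v, (∫ ω, f (fun i => if (i:ℕ) < k then X i ω
            else if i = κ then v else w i) ∂P) ∂(P.map (X κ))
          = ∫ v, Ψ (w, v) ∂(P.map (X κ)) := rfl
      have eR : (∫ ω, f (fun i => if (i:ℕ) < k then X i ω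
            else if i = κ then X κ ω else w i) ∂P) = G w := by
        simp only [hG]
        apply integral_congr_ae
        filter_upwards with ω
        have epatch : (fun i : Fin d => if (i:ℕ) < k then X i ω
            else if i = κ then X κ ω else w i)
            = (fun i : Fin d => if (i:ℕ) < k + 1 then X i ω else w i) := by
          funext i
          by_cases h1 : (i:ℕ) < k
          · simp only [if_pos h1, if_pos (Nat.lt_succ_of_lt h1)]
          · by_cases h2 : i = κ
            · subst h2
              simp [h1, hκ]
            · have hik : (i:ℕ) ≠ k := fun hh => h2 (Fin.ext hh)
              have h3 : ¬ (i:ℕ) < k + 1 := by omega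
              simp only [if_neg h1, if_neg h2, if_neg h3]
        simp only [epatch]
      calc ∫ v, Ψ (w, v) ∂(P.map (X κ))
          = ∫ v, (∫ ω, f (fun i => if (i:ℕ) < k then X i ω
              else if i = κ then v else w i) ∂P) ∂(P.map (X κ)) := eL.symm
        _ ≤ ∫ ω, f (fun i => if (i:ℕ) < k then X i ω
              else if i = κ then X κ ω else w i) ∂P := hcore
        _ = G w := eR
    -- integrate the pointwise inequality
    have hmeasInner : Continuous fun w : Fin d → ℝ => ∫ v, Ψ (w, v) ∂(P.map (X κ)) := by
      apply continuous_of_dominated (bound := fun _ => C)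
      · exact fun w => (hΨc.comp
          (continuous_const.prodMk continuous_id)).measurable.aestronglyMeasurable
      · exact fun w => Filter.Eventually.of_forall fun v => by
          simpa [Real.norm_eq_abs] using hΨb (w, v)
      · exact integrable_const C
      · exact Filter.Eventually.of_forall fun v =>
          hΨc.comp (continuous_id.prodMk continuous_const)
    have intl : Integrable (fun w => ∫ v, Ψ (w, v) ∂(P.map (X κ))) (P'.map W) :=
      integrable_of_bdd hmeasInner.measurable.aestronglyMeasurable
        (fun w => abs_integral_le' (P.map (X κ)) _ C (fun v => hΨb (w, v)))
    have intG : Integrable G (P'.map W) :=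
      integrable_of_bdd hGc.measurable.aestronglyMeasurable hGb
    calc F k = ∫ ω', Ψ (W ω', Xhat κ ω') ∂P' := Fk
      _ = ∫ w, ∫ v, Ψ (w, v) ∂(P.map (X κ)) ∂(P'.map W) := key1
      _ ≤ ∫ w, G w ∂(P'.map W) := integral_mono intl intG hptw
      _ = ∫ ω', G (W ω') ∂P' := key2.symm
      _ = F (k + 1) := Fk1.symm
  have hmono : ∀ k, k ≤ d → F 0 ≤ F k := by
    intro k
    induction k with
    | zero => intro _; exact le_rfl
    | succ m ih => intro hm; exact (ih (by omega)).trans (hstep m (by omega))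
  calc ∫ ω', f (fun i => Xhat i ω') ∂P' = F 0 := h0.symm
    _ ≤ F d := hmono d le_rfl
    _ = ∫ ω, f (fun i => X i ω) ∂P := hd
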